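/- The weak-learning margins of the two gadget matrices and their block product are all equal to 1/5: γ(L_A) = γ(L_B) = γ(L_A ⊞ L_B) = 1/5. Moreover, for any distribution W on the rows of M₀ = L_A ⊞ L_B with marginals (a,b), one has max_{1≤j≤8} (Wᵀ M₀)_j = max( max_{1≤j≤4} (aᵀ L_A)_j , max_{1≤j≤4} (bᵀ L_B)_j ). -/

import Mathlib

open Finset Filter

/-- A probability vector: nonnegative entries summing to 1. -/
def IsProbVec {ι : Type*} [Fintype ι] (D : ι → ℝ) : Prop :=
  (∀ i, 0 ≤ D i) ∧ ∑ i, D i = 1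

/-- All entries of the matrix are `+1` or `-1`. -/
def IsSignMatrix {ι : Type*} {N : ℕ} (M : ι → Fin N → ℝ) : Prop :=
  ∀ i j, M i j = 1 ∨ M i j = -1

/-- The edge of column `j` at distribution `D`. -/
def edge {ι : Type*} [Fintype ι] {N : ℕ} (M : ι → Fin N → ℝ) (D : ι → ℝ)
    (j : Fin N) : ℝ :=
  ∑ i, D i * M i j
/-- The weak-learning margin `γ(M)`. -/
noncomputable def margin {ι : Type*} [Fintype ι] {N : ℕ} [NeZero N]
    (M : ι → Fin N → ℝ) : ℝ :=
  sInf {x : ℝ | ∃ D : ι → ℝ, IsProbVec D ∧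
    x = Finset.univ.sup' Finset.univ_nonempty (edge M D)}

/-- The 4×4 gadget matrix `L_A`. -/
def LA : Fin 4 → Fin 4 → ℝ :=
  ![![1, 1, -1, -1], ![-1, 1, 1, 1], ![1, -1, -1, 1], ![1, -1, 1, -1]]

/-- The 5×4 gadget matrix `L_B`. -/
def LB : Fin 5 → Fin 4 → ℝ :=
  ![![1, 1, -1, -1], ![-1, 1, 1, 1], ![1, -1, -1, 1], ![1, -1, 1, -1],
    ![1, -1, 1, 1]]

/-- The 20×8 block product `M₀ = L_A ⊞ L_B`: rows are indexed by pairs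
`(r, s) ∈ Fin 4 × Fin 5`; columns `0,1,2,3` are the A-columns `A₁,…,A₄`
(copied from row `r` of `L_A`) and columns `4,5,6,7` are the B-columns
`B₁,…,B₄` (copied from row `s` of `L_B`). -/
def M₀ : Fin 4 × Fin 5 → Fin 8 → ℝ := fun p j =>
  if h : (j : ℕ) < 4 then LA p.1 ⟨(j : ℕ), h⟩
  else LB p.2 ⟨(j : ℕ) - 4, by have := j.isLt; omega⟩

/-! ### Auxiliary material -/

lemma sup4 (f : Fin 4 → ℝ) :
    Finset.univ.sup' Finset.univ_nonempty f
      = max (max (max (f 0) (f 1)) (f 2)) (f 3) := by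
  apply le_antisymm
  · refine Finset.sup'_le _ _ fun i _ => ?_
    fin_cases i <;> simp [le_max_iff]
  · simp only [max_le_iff]
    refine ⟨⟨⟨?_, ?_⟩, ?_⟩, ?_⟩ <;> exact Finset.le_sup' f (mem_univ _)

lemma sup8 (f : Fin 8 → ℝ) :
    Finset.univ.sup' Finset.univ_nonempty f
      = max (max (max (max (max (max (max (f 0) (f 1)) (f 2)) (f 3)) (f 4))
          (f 5)) (f 6)) (f 7) := by
  apply le_antisymm
  · refine Finset.sup'_le _ _ fun i _ => ?_
    fin_cases i <;> simp [le_max_iff]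
  · simp only [max_le_iff]
    refine ⟨⟨⟨⟨⟨⟨⟨?_, ?_⟩, ?_⟩, ?_⟩, ?_⟩, ?_⟩, ?_⟩, ?_⟩ <;>
      exact Finset.le_sup' f (mem_univ _)

noncomputable def DAvec : Fin 4 → ℝ := ![1/5, 2/5, 1/5, 1/5]
noncomputable def DBvec : Fin 5 → ℝ := ![1/5, 2/5, 1/5, 1/5, 0]

lemma DA_prob : IsProbVec DAvec := by
  constructor
  · intro i; fin_cases i <;> norm_num [DAvec]
  · norm_num [Fin.sum_univ_four, DAvec, Matrix.vecHead, Matrix.vecTail, Matrix.cons_val_two, Matrix.cons_val_three, Matrix.cons_val_four]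

lemma DB_prob : IsProbVec DBvec := by
  constructor
  · intro i; fin_cases i <;> norm_num [DBvec]
  · norm_num [Fin.sum_univ_five, DBvec, Matrix.vecHead, Matrix.vecTail, Matrix.cons_val_two, Matrix.cons_val_three, Matrix.cons_val_four]

lemma edge_DA : ∀ j, edge LA DAvec j = 1/5 := by
  intro j
  fin_cases j <;>
    norm_num [edge, Fin.sum_univ_four, LA, DAvec, Matrix.vecHead, Matrix.vecTail, Matrix.cons_val_two, Matrix.cons_val_three, Matrix.cons_val_four]

lemma edge_DB : ∀ j, edge LB DBvec j = 1/5 := by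
  intro j
  fin_cases j <;>
    norm_num [edge, Fin.sum_univ_five, LB, DBvec, Matrix.vecHead, Matrix.vecTail, Matrix.cons_val_two, Matrix.cons_val_three, Matrix.cons_val_four]

lemma supA_DA : Finset.univ.sup' Finset.univ_nonempty (edge LA DAvec) = 1/5 := by
  rw [sup4, edge_DA, edge_DA, edge_DA, edge_DA]; norm_num

lemma supB_DB : Finset.univ.sup' Finset.univ_nonempty (edge LB DBvec) = 1/5 := by
  rw [sup4, edge_DB, edge_DB, edge_DB, edge_DB]; norm_num

lemma lowerA (D : Fin 4 → ℝ) (hD : IsProbVec D) :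
    (1/5 : ℝ) ≤ Finset.univ.sup' Finset.univ_nonempty (edge LA D) := by
  obtain ⟨hpos, hsum⟩ := hD
  have key : ∀ j : Fin 4, edge LA D j ≤
      Finset.univ.sup' Finset.univ_nonempty (edge LA D) :=
    fun j => Finset.le_sup' _ (mem_univ j)
  have E0 : edge LA D 0 = D 0 - D 1 + D 2 + D 3 := by
    norm_num [edge, Fin.sum_univ_four, LA, Matrix.vecHead, Matrix.vecTail, Matrix.cons_val_two, Matrix.cons_val_three, Matrix.cons_val_four]; ring
  have E1 : edge LA D 1 = D 0 + D 1 - D 2 - D 3 := by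
    norm_num [edge, Fin.sum_univ_four, LA, Matrix.vecHead, Matrix.vecTail, Matrix.cons_val_two, Matrix.cons_val_three, Matrix.cons_val_four]; ring
  have E2 : edge LA D 2 = -D 0 + D 1 - D 2 + D 3 := by
    norm_num [edge, Fin.sum_univ_four, LA, Matrix.vecHead, Matrix.vecTail, Matrix.cons_val_two, Matrix.cons_val_three, Matrix.cons_val_four]; ring
  have E3 : edge LA D 3 = -D 0 + D 1 + D 2 - D 3 := by
    norm_num [edge, Fin.sum_univ_four, LA, Matrix.vecHead, Matrix.vecTail, Matrix.cons_val_two, Matrix.cons_val_three, Matrix.cons_val_four]; ring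
  have h0 := key 0; have h1 := key 1; have h2 := key 2; have h3 := key 3
  rw [E0] at h0; rw [E1] at h1; rw [E2] at h2; rw [E3] at h3
  rw [Fin.sum_univ_four] at hsum
  linarith

lemma lowerB (D : Fin 5 → ℝ) (hD : IsProbVec D) :
    (1/5 : ℝ) ≤ Finset.univ.sup' Finset.univ_nonempty (edge LB D) := by
  obtain ⟨hpos, hsum⟩ := hD
  have key : ∀ j : Fin 4, edge LB D j ≤
      Finset.univ.sup' Finset.univ_nonempty (edge LB D) :=
    fun j => Finset.le_sup' _ (mem_univ j)
  have E0 : edge LB D 0 = D 0 - D 1 + D 2 + D 3 + D 4 := by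
    norm_num [edge, Fin.sum_univ_five, LB, Matrix.vecHead, Matrix.vecTail, Matrix.cons_val_two, Matrix.cons_val_three, Matrix.cons_val_four]; ring
  have E1 : edge LB D 1 = D 0 + D 1 - D 2 - D 3 - D 4 := by
    norm_num [edge, Fin.sum_univ_five, LB, Matrix.vecHead, Matrix.vecTail, Matrix.cons_val_two, Matrix.cons_val_three, Matrix.cons_val_four]; ring
  have E2 : edge LB D 2 = -D 0 + D 1 - D 2 + D 3 + D 4 := by
    norm_num [edge, Fin.sum_univ_five, LB, Matrix.vecHead, Matrix.vecTail, Matrix.cons_val_two, Matrix.cons_val_three, Matrix.cons_val_four]; ring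
  have E3 : edge LB D 3 = -D 0 + D 1 + D 2 - D 3 + D 4 := by
    norm_num [edge, Fin.sum_univ_five, LB, Matrix.vecHead, Matrix.vecTail, Matrix.cons_val_two, Matrix.cons_val_three, Matrix.cons_val_four]; ring
  have h0 := key 0; have h1 := key 1; have h2 := key 2; have h3 := key 3
  rw [E0] at h0; rw [E1] at h1; rw [E2] at h2; rw [E3] at h3
  rw [Fin.sum_univ_five] at hsum
  linarith [hpos 4]

lemma eqA (W : Fin 4 × Fin 5 → ℝ) (j : Fin 4) :
    edge M₀ W ⟨(j : ℕ), by omega⟩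
      = edge LA (fun r => ∑ s : Fin 5, W (r, s)) j := by
  unfold edge M₀
  rw [Fintype.sum_prod_type]
  simp only [dif_pos (show ((⟨(j:ℕ), by omega⟩ : Fin 8) : ℕ) < 4 from j.isLt)]
  exact Finset.sum_congr rfl fun r _ => by rw [Finset.sum_mul]

lemma eqB (W : Fin 4 × Fin 5 → ℝ) (j : Fin 4) :
    edge M₀ W ⟨(j : ℕ) + 4, by omega⟩
      = edge LB (fun s => ∑ r : Fin 4, W (r, s)) j := by
  unfold edge M₀
  rw [Fintype.sum_prod_type_right]
  have h : ¬ ((⟨(j:ℕ) + 4, by omega⟩ : Fin 8) : ℕ) < 4 := by simp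
  simp only [dif_neg h]
  have h2 : (⟨((⟨(j:ℕ) + 4, by omega⟩ : Fin 8) : ℕ) - 4, by omega⟩ : Fin 4) = j := by
    ext; simp
  rw [h2]
  exact Finset.sum_congr rfl fun s _ => by rw [Finset.sum_mul]

lemma claim4 (W : Fin 4 × Fin 5 → ℝ) :
    Finset.univ.sup' Finset.univ_nonempty (edge M₀ W) =
      max
        (Finset.univ.sup' Finset.univ_nonempty
          (edge LA fun r => ∑ s : Fin 5, W (r, s)))
        (Finset.univ.sup' Finset.univ_nonempty
          (edge LB fun s => ∑ r : Fin 4, W (r, s))) := by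
  rw [sup8, sup4, sup4]
  have e0 : edge M₀ W 0 = edge LA (fun r => ∑ s : Fin 5, W (r, s)) 0 := eqA W 0
  have e1 : edge M₀ W 1 = edge LA (fun r => ∑ s : Fin 5, W (r, s)) 1 := eqA W 1
  have e2 : edge M₀ W 2 = edge LA (fun r => ∑ s : Fin 5, W (r, s)) 2 := eqA W 2
  have e3 : edge M₀ W 3 = edge LA (fun r => ∑ s : Fin 5, W (r, s)) 3 := eqA W 3
  have e4 : edge M₀ W 4 = edge LB (fun s => ∑ r : Fin 4, W (r, s)) 0 := eqB W 0
  have e5 : edge M₀ W 5 = edge LB (fun s => ∑ r : Fin 4, W (r, s)) 1 := eqB W 1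
  have e6 : edge M₀ W 6 = edge LB (fun s => ∑ r : Fin 4, W (r, s)) 2 := eqB W 2
  have e7 : edge M₀ W 7 = edge LB (fun s => ∑ r : Fin 4, W (r, s)) 3 := eqB W 3
  rw [e0, e1, e2, e3, e4, e5, e6, e7]
  simp [max_assoc]

noncomputable def W₀ : Fin 4 × Fin 5 → ℝ := fun p => DAvec p.1 * DBvec p.2

lemma W₀_prob : IsProbVec W₀ := by
  constructor
  · rintro ⟨r, s⟩
    exact mul_nonneg (DA_prob.1 r) (DB_prob.1 s)
  · rw [Fintype.sum_prod_type]
    have : ∀ r : Fin 4, ∑ s : Fin 5, W₀ (r, s) = DAvec r := by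
      intro r
      simp only [W₀, ← Finset.mul_sum, DB_prob.2, mul_one]
    simp only [this]
    exact DA_prob.2

lemma margA : ∀ r : Fin 4, (∑ s : Fin 5, W₀ (r, s)) = DAvec r := by
  intro r
  simp only [W₀, ← Finset.mul_sum, DB_prob.2, mul_one]

lemma margB : ∀ s : Fin 5, (∑ r : Fin 4, W₀ (r, s)) = DBvec s := by
  intro s
  simp only [W₀, ← Finset.sum_mul, DA_prob.2, one_mul]

lemma supM₀_W₀ :
    Finset.univ.sup' Finset.univ_nonempty (edge M₀ W₀) = 1/5 := by
  rw [claim4]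
  have hA : (fun r => ∑ s : Fin 5, W₀ (r, s)) = DAvec := funext margA
  have hB : (fun s => ∑ r : Fin 4, W₀ (r, s)) = DBvec := funext margB
  rw [hA, hB, supA_DA, supB_DB]
  norm_num

theorem margins_eq_one_fifth :
    margin LA = 1 / 5 ∧ margin LB = 1 / 5 ∧ margin M₀ = 1 / 5 ∧
    ∀ W : Fin 4 × Fin 5 → ℝ, IsProbVec W →
      Finset.univ.sup' Finset.univ_nonempty (edge M₀ W) =
        max
          (Finset.univ.sup' Finset.univ_nonempty
            (edge LA fun r => ∑ s : Fin 5, W (r, s)))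
          (Finset.univ.sup' Finset.univ_nonempty
            (edge LB fun s => ∑ r : Fin 4, W (r, s))) := by
  have memA : (1/5 : ℝ) ∈ {x : ℝ | ∃ D : Fin 4 → ℝ, IsProbVec D ∧
      x = Finset.univ.sup' Finset.univ_nonempty (edge LA D)} :=
    ⟨DAvec, DA_prob, supA_DA.symm⟩
  have lbA : ∀ x ∈ {x : ℝ | ∃ D : Fin 4 → ℝ, IsProbVec D ∧
      x = Finset.univ.sup' Finset.univ_nonempty (edge LA D)}, (1/5 : ℝ) ≤ x := by
    rintro x ⟨D, hD, rfl⟩; exact lowerA D hD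
  have memB : (1/5 : ℝ) ∈ {x : ℝ | ∃ D : Fin 5 → ℝ, IsProbVec D ∧
      x = Finset.univ.sup' Finset.univ_nonempty (edge LB D)} :=
    ⟨DBvec, DB_prob, supB_DB.symm⟩
  have lbB : ∀ x ∈ {x : ℝ | ∃ D : Fin 5 → ℝ, IsProbVec D ∧
      x = Finset.univ.sup' Finset.univ_nonempty (edge LB D)}, (1/5 : ℝ) ≤ x := by
    rintro x ⟨D, hD, rfl⟩; exact lowerB D hD
  have memM : (1/5 : ℝ) ∈ {x : ℝ | ∃ D : Fin 4 × Fin 5 → ℝ, IsProbVec D ∧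
      x = Finset.univ.sup' Finset.univ_nonempty (edge M₀ D)} :=
    ⟨W₀, W₀_prob, supM₀_W₀.symm⟩
  have lbM : ∀ x ∈ {x : ℝ | ∃ D : Fin 4 × Fin 5 → ℝ, IsProbVec D ∧
      x = Finset.univ.sup' Finset.univ_nonempty (edge M₀ D)}, (1/5 : ℝ) ≤ x := by
    rintro x ⟨D, hD, rfl⟩
    rw [claim4]
    refine le_trans (lowerA _ ⟨fun r => Finset.sum_nonneg fun s _ => hD.1 (r, s), ?_⟩)
      (le_max_left _ _)
    rw [← Fintype.sum_prod_type]
    exact hD.2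
  refine ⟨?_, ?_, ?_, fun W _ => claim4 W⟩
  · unfold margin
    exact le_antisymm (csInf_le ⟨1/5, lbA⟩ memA) (le_csInf ⟨_, memA⟩ lbA)
  · unfold margin
    exact le_antisymm (csInf_le ⟨1/5, lbB⟩ memB) (le_csInf ⟨_, memB⟩ lbB)
  · unfold margin
    exact le_antisymm (csInf_le ⟨1/5, lbM⟩ memM) (le_csInf ⟨_, memM⟩ lbM)
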